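/- Let H be a Hilbert space, P : Dom P ⊂ H → H a closed densely defined linear operator, and suppose there exist bounded operators A, K : H → H with K compact such that A P u + K u = u for all u ∈ Dom P. Then there is a constant C > 0 such that ‖P u‖ ≥ C ‖u‖ for all u ∈ Dom P ∩ (Ker P)⊥, provided Ker P is closed; consequently P has closed range. -/

import Mathlib

open Filter Topology

/-- Closedness of a `LinearPMap` in sequential form. -/
lemma closed_seq {H : Type*} [NormedAddCommGroup H] [InnerProductSpace ℂ H]
    (P : H →ₗ.[ℂ] H) (hPclosed : P.IsClosed) (u : ℕ → P.domain) (x y : H)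
    (hx : Tendsto (fun n => (u n : H)) atTop (𝓝 x))
    (hy : Tendsto (fun n => P (u n)) atTop (𝓝 y)) :
    ∃ hx : x ∈ P.domain, P ⟨x, hx⟩ = y := by
  have hmem : (x, y) ∈ P.graph := by
    have ht : Tendsto (fun n => ((u n : H), P (u n))) atTop (𝓝 (x, y)) :=
      hx.prodMk_nhds hy
    exact hPclosed.mem_of_tendsto ht (Eventually.of_forall fun n => P.mem_graph (u n))
  obtain ⟨⟨z, hz⟩, hz1, hz2⟩ := P.mem_graph_iff.mp hmem
  simp only [Subtype.coe_mk] at hz1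
  subst hz1
  exact ⟨hz, hz2⟩

/-- If `P` is a closed densely defined operator on a Hilbert space `H`,
`A`, `K` bounded with `K` compact and `A P u + K u = u` for all `u ∈ Dom P`, and `Ker P`
is closed, then there is `C > 0` with `‖P u‖ ≥ C ‖u‖` for all `u ∈ Dom P ∩ (Ker P)ᗮ`;
consequently `P` has closed range. -/
theorem stmt1 {H : Type*} [NormedAddCommGroup H] [InnerProductSpace ℂ H] [CompleteSpace H]
    (P : H →ₗ.[ℂ] H) (hPdense : Dense (P.domain : Set H)) (hPclosed : P.IsClosed)
    (A K : H →L[ℂ] H) (hK : IsCompactOperator K)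
    (hAPK : ∀ u : P.domain, A (P u) + K (u : H) = (u : H))
    (hker : IsClosed {v : H | ∃ hv : v ∈ P.domain, P ⟨v, hv⟩ = 0}) :
    (∃ C : ℝ, 0 < C ∧ ∀ u : P.domain,
        (∀ v : P.domain, P v = 0 → @inner ℂ H _ (v : H) (u : H) = 0) →
        C * ‖(u : H)‖ ≤ ‖P u‖) ∧
      IsClosed (Set.range fun u : P.domain => P u) := by
  -- Part 1: the coercivity estimate
  have key : ∃ C : ℝ, 0 < C ∧ ∀ u : P.domain,
      (∀ v : P.domain, P v = 0 → @inner ℂ H _ (v : H) (u : H) = 0) →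
      C * ‖(u : H)‖ ≤ ‖P u‖ := by
    by_contra hcon
    push_neg at hcon
    -- pick a sequence with ‖P u‖ < ‖u‖/(n+1)
    have hsel : ∀ n : ℕ, ∃ u : P.domain,
        (∀ v : P.domain, P v = 0 → @inner ℂ H _ (v : H) (u : H) = 0) ∧
        ‖P u‖ < ((n : ℝ) + 1)⁻¹ * ‖(u : H)‖ := by
      intro n
      exact hcon ((n : ℝ) + 1)⁻¹ (by positivity)
    choose u horth hsmall using hsel
    have hune : ∀ n, ‖(u n : H)‖ ≠ 0 := by
      intro n h
      have := hsmall n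
      rw [h, mul_zero] at this
      exact absurd this (not_lt.mpr (norm_nonneg _))
    -- normalized sequence
    set w : ℕ → P.domain := fun n => ((‖(u n : H)‖⁻¹ : ℝ) : ℂ) • u n with hw
    have hwnorm : ∀ n, ‖(w n : H)‖ = 1 := by
      intro n
      simp only [hw, Submodule.coe_smul, norm_smul, Complex.norm_real, norm_inv, norm_norm]
      exact inv_mul_cancel₀ (hune n)
    have hPw : ∀ n, ‖P (w n)‖ < ((n : ℝ) + 1)⁻¹ := by
      intro n
      rw [hw]
      simp only
      rw [P.map_smul, norm_smul, Complex.norm_real, norm_inv, norm_norm]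
      have h1 : ‖(u n : H)‖⁻¹ * ‖P (u n)‖ < ‖(u n : H)‖⁻¹ * (((n : ℝ) + 1)⁻¹ * ‖(u n : H)‖) := by
        apply mul_lt_mul_of_pos_left (hsmall n)
        exact inv_pos.mpr (lt_of_le_of_ne (norm_nonneg _) (Ne.symm (hune n)))
      calc ‖(u n : H)‖⁻¹ * ‖P (u n)‖ < ‖(u n : H)‖⁻¹ * (((n : ℝ) + 1)⁻¹ * ‖(u n : H)‖) := h1
        _ = ((n : ℝ) + 1)⁻¹ * (‖(u n : H)‖⁻¹ * ‖(u n : H)‖) := by ring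
        _ = ((n : ℝ) + 1)⁻¹ := by rw [inv_mul_cancel₀ (hune n), mul_one]
    have hPw0 : Tendsto (fun n => P (w n)) atTop (𝓝 0) := by
      rw [tendsto_zero_iff_norm_tendsto_zero]
      apply squeeze_zero (fun n => norm_nonneg _) (fun n => le_of_lt (hPw n))
      exact tendsto_one_div_add_atTop_nhds_zero_nat.congr (by simp [one_div])
    have hworth : ∀ n, ∀ v : P.domain, P v = 0 → @inner ℂ H _ (v : H) ((w n : H)) = 0 := by
      intro n v hv
      simp only [hw, Submodule.coe_smul, inner_smul_right, horth n v hv, mul_zero]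
    -- compactness: extract convergent subsequence of K (w n)
    obtain ⟨T, hT, hTsub⟩ :=
      hK.image_closedBall_subset_compact (𝕜₁ := ℂ) (f := K.toLinearMap) 1
    have hmemT : ∀ n, K ((w n : H)) ∈ T := by
      intro n
      apply hTsub
      exact ⟨(w n : H), by simp [Metric.mem_closedBall, hwnorm n, dist_eq_norm], rfl⟩
    obtain ⟨z, _, φ, hφ, hzconv⟩ := hT.tendsto_subseq hmemT
    -- w (φ n) → z
    have hA0 : Tendsto (fun n => A (P (w (φ n)))) atTop (𝓝 0) := by
      have : Tendsto (fun n => P (w (φ n))) atTop (𝓝 0) :=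
        hPw0.comp hφ.tendsto_atTop
      simpa [Function.comp_def] using (A.continuous.tendsto 0).comp this
    have hwconv : Tendsto (fun n => ((w (φ n)) : H)) atTop (𝓝 z) := by
      have : Tendsto (fun n => A (P (w (φ n))) + K ((w (φ n) : H))) atTop (𝓝 (0 + z)) :=
        hA0.add hzconv
      rw [zero_add] at this
      exact this.congr fun n => hAPK (w (φ n))
    have hznorm : ‖z‖ = 1 := by
      have := (continuous_norm.tendsto z).comp hwconv
      have h2 : Tendsto (fun n => ‖((w (φ n)) : H)‖) atTop (𝓝 1) := by
        simpa [hwnorm] using tendsto_const_nhds (α := ℕ) (x := (1 : ℝ))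
      exact tendsto_nhds_unique this h2
    -- z is in the kernel
    obtain ⟨hzdom, hPz⟩ := closed_seq P hPclosed (fun n => w (φ n)) z 0 hwconv
      ((hPw0.comp hφ.tendsto_atTop))
    -- z ⊥ itself
    have hzz : @inner ℂ H _ z z = 0 := by
      have ht : Tendsto (fun n => @inner ℂ H _ z ((w (φ n)) : H)) atTop (𝓝 (@inner ℂ H _ z z)) :=
        Tendsto.inner tendsto_const_nhds hwconv
      have h0 : (fun n => @inner ℂ H _ z ((w (φ n)) : H)) = fun _ => (0 : ℂ) :=
        funext fun n => hworth (φ n) ⟨z, hzdom⟩ hPz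
      rw [h0] at ht
      exact tendsto_nhds_unique ht tendsto_const_nhds
    have : z = 0 := inner_self_eq_zero.mp hzz
    rw [this, norm_zero] at hznorm
    exact zero_ne_one hznorm
  obtain ⟨C, hC, hbound⟩ := key
  refine ⟨⟨C, hC, hbound⟩, ?_⟩
  -- Part 2: closed range
  -- the kernel as a submodule
  set N : Submodule ℂ H := (LinearMap.ker P.toFun).map P.domain.subtype with hN
  have hNmem : ∀ v : H, v ∈ N ↔ ∃ hv : v ∈ P.domain, P ⟨v, hv⟩ = 0 := by
    intro v
    constructor
    · rintro ⟨⟨x, hx⟩, hx0, rfl⟩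
      exact ⟨hx, hx0⟩
    · rintro ⟨hv, hv0⟩
      exact ⟨⟨v, hv⟩, hv0, rfl⟩
  have hNclosed : IsClosed (N : Set H) := by
    convert hker using 1
    ext v
    exact hNmem v
  haveI : CompleteSpace N := hNclosed.completeSpace_coe
  apply isClosed_of_closure_subset
  intro y hy
  rw [mem_closure_iff_seq_limit] at hy
  obtain ⟨x, hxmem, hxlim⟩ := hy
  choose u hu using hxmem
  -- project away the kernel component
  have hpk : ∀ n, ∃ hp : ((N.orthogonalProjectionOnto ((u n : H)) : H)) ∈ P.domain,
      P ⟨_, hp⟩ = 0 := fun n => (hNmem _).mp (N.orthogonalProjectionOnto ((u n : H))).2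
  choose hpdom hpzero using hpk
  set u' : ℕ → P.domain := fun n => u n - ⟨_, hpdom n⟩ with hu'
  have hPu' : ∀ n, P (u' n) = x n := by
    intro n
    rw [hu']
    simp only
    rw [P.map_sub, hpzero n, sub_zero]
    exact hu n
  have hu'orth : ∀ n, ((u' n : H)) ∈ Nᗮ := by
    intro n
    have := Submodule.sub_starProjection_mem_orthogonal (K := N) ((u n : H))
    simpa [hu'] using this
  have hu'cond : ∀ n, ∀ v : P.domain, P v = 0 → @inner ℂ H _ (v : H) ((u' n : H)) = 0 := by
    intro n v hv
    exact (Submodule.mem_orthogonal N _).mp (hu'orth n) _ ((hNmem _).mpr ⟨v.2, by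
      convert hv using 2⟩)
  -- the sequence u' is Cauchy
  have hcauchy : CauchySeq (fun n => ((u' n) : H)) := by
    rw [Metric.cauchySeq_iff]
    intro ε hε
    have hxc : CauchySeq x := hxlim.cauchySeq
    rw [Metric.cauchySeq_iff] at hxc
    obtain ⟨M, hM⟩ := hxc (C * ε) (by positivity)
    refine ⟨M, fun m hm n hn => ?_⟩
    have horthd : ∀ v : P.domain, P v = 0 →
        @inner ℂ H _ (v : H) (((u' m - u' n) : P.domain) : H) = 0 := by
      intro v hv
      simp only [Submodule.coe_sub, inner_sub_right, hu'cond m v hv, hu'cond n v hv, sub_zero]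
    have hb := hbound (u' m - u' n) horthd
    rw [P.map_sub, hPu' m, hPu' n] at hb
    have h1 : C * ‖((u' m : H)) - ((u' n : H))‖ ≤ ‖x m - x n‖ := by
      simpa using hb
    have h2 : ‖x m - x n‖ < C * ε := by
      have := hM m hm n hn
      rwa [dist_eq_norm] at this
    rw [dist_eq_norm]
    have := lt_of_le_of_lt h1 h2
    calc ‖((u' m : H)) - ((u' n : H))‖
        = C⁻¹ * (C * ‖((u' m : H)) - ((u' n : H))‖) := by
          field_simp
      _ < C⁻¹ * (C * ε) := by
          apply mul_lt_mul_of_pos_left this (inv_pos.mpr hC)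
      _ = ε := by field_simp
  obtain ⟨l, hl⟩ := cauchySeq_tendsto_of_complete hcauchy
  have hPl : Tendsto (fun n => P (u' n)) atTop (𝓝 y) := by
    simpa [hPu'] using hxlim
  obtain ⟨hldom, hPly⟩ := closed_seq P hPclosed u' l y hl hPl
  exact ⟨⟨l, hldom⟩, hPly⟩
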